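/- Let d ≥ 1 and let θ̂^{(1)}, …, θ̂^{(B)} be independent and identically distributed random vectors in ℝ^d such that θ̂^{(1)} − θ₀ is MCH and has zero orthant median bias (i.e., P(θ̂^{(1)} − θ₀ ∈ A) = 2^{−d} for every closed orthant A ∈ O^d). Then P(θ₀ ∉ Rect-Hull_B) = 1 − (1 − 2^{−B+1})^d, and for α ∈ (0,1) this miscoverage is at most α if and only if B ≥ 1 − log₂(1 − (1−α)^{1/d}). -/

import Mathlib

open MeasureTheory ProbabilityTheory
open scoped ENNReal

/-- The closed orthant of `ℝ^d` determined by a sign pattern `s : Fin d → Bool`. -/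
def orthant {d : ℕ} (s : Fin d → Bool) : Set (Fin d → ℝ) :=
  {x | ∀ j, if s j then 0 ≤ x j else x j ≤ 0}

open Real in
lemma part2 {d B : ℕ} (hd : 1 ≤ d) (hB : 1 ≤ B) {α : ℝ} (hα : α ∈ Set.Ioo (0:ℝ) 1) :
    (1 - (1 - (2:ℝ) ^ (1 - (B:ℤ))) ^ d ≤ α
      ↔ 1 - Real.logb 2 (1 - (1 - α) ^ ((d : ℝ)⁻¹)) ≤ (B : ℝ)) := by
  obtain ⟨hα0, hα1⟩ := hα
  have hd0 : (0:ℝ) < d := by exact_mod_cast hd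
  set p : ℝ := (2:ℝ) ^ (1 - (B:ℤ)) with hp
  have hp0 : 0 < p := zpow_pos (by norm_num) _
  have hp1 : p ≤ 1 := by
    have h : (1 - (B:ℤ)) ≤ 0 := by omega
    calc p ≤ (2:ℝ)^(0:ℤ) := zpow_le_zpow_right₀ (by norm_num) h
    _ = 1 := by norm_num
  have h1a : (0:ℝ) < 1 - α := by linarith
  have hr1 : (1 - α) ^ ((d : ℝ)⁻¹) < 1 :=
    Real.rpow_lt_one (le_of_lt h1a) (by linarith) (by positivity)
  set x : ℝ := 1 - (1 - α) ^ ((d : ℝ)⁻¹) with hx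
  have hx0 : 0 < x := by simp only [hx]; linarith
  have step1 : (1 - (1 - p) ^ d ≤ α) ↔ 1 - α ≤ (1-p)^d := by constructor <;> intro <;> linarith
  have step2 : (1 - α ≤ (1-p)^d) ↔ (1 - α) ^ ((d:ℝ)⁻¹) ≤ 1 - p := by
    rw [← Real.rpow_natCast (1-p) d, ← Real.rpow_le_rpow_iff (le_of_lt h1a) (Real.rpow_nonneg (by linarith) _) (show (0:ℝ) < (d:ℝ)⁻¹ by positivity), ← Real.rpow_mul (by linarith), mul_inv_cancel₀ (ne_of_gt hd0), Real.rpow_one]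
  have step3 : ((1 - α) ^ ((d:ℝ)⁻¹) ≤ 1 - p) ↔ p ≤ x := by
    constructor <;> intro <;> simp only [hx] at * <;> linarith
  have step4 : (p ≤ x) ↔ (1 - (B:ℝ) ≤ Real.logb 2 x) := by
    rw [Real.le_logb_iff_rpow_le (by norm_num) hx0, hp,
      show ((2:ℝ) ^ (1 - (B:ℤ)) = (2:ℝ) ^ ((1 - (B:ℝ)))) by rw [← Real.rpow_intCast]; norm_num]
  rw [step1, step2, step3, step4]
  constructor <;> intro <;> linarith

/-- strict orthant around θ₀ -/
def sOrth {d : ℕ} (θ₀ : Fin d → ℝ) (s : Fin d → Bool) : Set (Fin d → ℝ) :=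
  {x | ∀ j, if s j then θ₀ j < x j else x j < θ₀ j}

/-- closed orthant around θ₀ -/
def cOrth {d : ℕ} (θ₀ : Fin d → ℝ) (s : Fin d → Bool) : Set (Fin d → ℝ) :=
  {x | ∀ j, if s j then θ₀ j ≤ x j else x j ≤ θ₀ j}

/-- boundary -/
def bdry {d : ℕ} (θ₀ : Fin d → ℝ) : Set (Fin d → ℝ) := {x | ∃ j, x j = θ₀ j}

lemma sOrth_meas {d : ℕ} (θ₀ : Fin d → ℝ) (s : Fin d → Bool) : MeasurableSet (sOrth θ₀ s) := by
  have : sOrth θ₀ s = ⋂ j, {x : Fin d → ℝ | if s j then θ₀ j < x j else x j < θ₀ j} := by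
    ext x; simp [sOrth, Set.mem_iInter]
  rw [this]
  refine MeasurableSet.iInter fun j => ?_
  by_cases h : s j <;> simp only [h, if_true, if_false]
  · exact measurableSet_lt measurable_const (measurable_pi_apply j)
  · exact measurableSet_lt (measurable_pi_apply j) measurable_const

lemma cOrth_meas {d : ℕ} (θ₀ : Fin d → ℝ) (s : Fin d → Bool) : MeasurableSet (cOrth θ₀ s) := by
  have : cOrth θ₀ s = ⋂ j, {x : Fin d → ℝ | if s j then θ₀ j ≤ x j else x j ≤ θ₀ j} := by
    ext x; simp [cOrth, Set.mem_iInter]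
  rw [this]
  refine MeasurableSet.iInter fun j => ?_
  by_cases h : s j <;> simp only [h, if_true, if_false]
  · exact measurableSet_le measurable_const (measurable_pi_apply j)
  · exact measurableSet_le (measurable_pi_apply j) measurable_const

lemma bdry_meas {d : ℕ} (θ₀ : Fin d → ℝ) : MeasurableSet (bdry θ₀) := by
  have : bdry θ₀ = ⋃ j, (fun x : Fin d → ℝ => x j) ⁻¹' {θ₀ j} := by
    ext x; simp [bdry]
  rw [this]
  exact MeasurableSet.iUnion fun j => (measurable_pi_apply j) (measurableSet_singleton _)

lemma sOrth_subset_cOrth {d : ℕ} (θ₀ : Fin d → ℝ) (s : Fin d → Bool) : sOrth θ₀ s ⊆ cOrth θ₀ s := by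
  intro x hx j
  have h := hx j
  cases hsj : s j <;> simp only [hsj] at h ⊢ <;> simp at h ⊢ <;> linarith

lemma cOrth_subset {d : ℕ} (θ₀ : Fin d → ℝ) (s : Fin d → Bool) :
    cOrth θ₀ s ⊆ sOrth θ₀ s ∪ bdry θ₀ := by
  intro x hx
  by_cases hb : x ∈ bdry θ₀
  · exact Or.inr hb
  · refine Or.inl fun j => ?_
    have h1 := hx j
    have h2 : x j ≠ θ₀ j := fun h => hb ⟨j, h⟩
    cases hsj : s j <;> simp only [hsj] at h1 ⊢ <;> simp at h1 ⊢
    · exact lt_of_le_of_ne h1 h2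
    · exact lt_of_le_of_ne h1 (Ne.symm h2)


lemma card_nonconst {B : ℕ} (hB : 1 ≤ B) :
    Fintype.card {c : Fin B → Bool // (∃ k, c k = true) ∧ (∃ k, c k = false)} = 2^B - 2 := by
  classical
  set p : (Fin B → Bool) → Prop := fun c => (∃ k, c k = true) ∧ (∃ k, c k = false) with hpdef
  have h1 : Fintype.card {c : Fin B → Bool // ¬ p c} = 2 := by
    have he : ∀ c : Fin B → Bool, (¬ p c) ↔
        ((c = fun _ => false) ∨ (c = fun _ => true)) := by
      intro c
      constructor
      · intro h
        rcases not_and_or.mp h with h | h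
        · left; funext k; simpa using (not_exists.mp h k)
        · right; funext k; simpa using (not_exists.mp h k)
      · rintro (rfl | rfl) ⟨⟨k, hk⟩, ⟨k', hk'⟩⟩ <;> simp_all
    rw [Fintype.card_subtype]
    have : (Finset.univ.filter fun c : Fin B → Bool => ¬ p c)
        = {fun _ => false, fun _ => true} := by
      ext c; simp [he c]
    rw [this]
    rw [Finset.card_insert_of_notMem (by
      simp only [Finset.mem_singleton]
      intro h
      have := congrFun h ⟨0, hB⟩
      simp at this), Finset.card_singleton]
  have key := Fintype.card_subtype_compl (α := Fin B → Bool) (fun c => ¬ p c)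
  have hnn : Fintype.card {c : Fin B → Bool // ¬¬ p c} = Fintype.card {c : Fin B → Bool // p c} :=
    Fintype.card_congr (Equiv.subtypeEquivRight (by intro c; exact not_not))
  rw [hnn, h1] at key
  simpa using key

lemma count_good {d B : ℕ} (hB : 1 ≤ B) :
    (Finset.univ.filter (fun σ : Fin B → Fin d → Bool =>
      ∀ j, (∃ k, σ k j = true) ∧ (∃ k, σ k j = false))).card = (2^B - 2)^d := by
  rw [← Fintype.card_subtype]
  have e1 : {σ : Fin B → Fin d → Bool // ∀ j, (∃ k, σ k j = true) ∧ (∃ k, σ k j = false)}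
      ≃ {τ : Fin d → Fin B → Bool // ∀ j, (∃ k, τ j k = true) ∧ (∃ k, τ j k = false)} :=
    (Equiv.piComm _).subtypeEquiv (by intro σ; rfl)
  have e2 : {τ : Fin d → Fin B → Bool // ∀ j, (∃ k, τ j k = true) ∧ (∃ k, τ j k = false)}
      ≃ ∀ _j : Fin d, {c : Fin B → Bool // (∃ k, c k = true) ∧ (∃ k, c k = false)} :=
    Equiv.subtypePiEquivPi (p := fun _j (c : Fin B → Bool) => (∃ k, c k = true) ∧ (∃ k, c k = false))
  rw [Fintype.card_congr (e1.trans e2), Fintype.card_pi]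
  simp [card_nonconst hB]

theorem main_calc
    {Ω : Type*} [MeasurableSpace Ω] (P : Measure Ω) [IsProbabilityMeasure P]
    {d B : ℕ} (hd : 1 ≤ d) (hB : 1 ≤ B)
    (θ : Fin B → Ω → Fin d → ℝ) (θ₀ : Fin d → ℝ)
    (hmeas : ∀ k, Measurable (θ k))
    (hindep : iIndepFun θ P)
    (hident : ∀ k, Measure.map (θ k) P = Measure.map (θ ⟨0, hB⟩) P)
    (hMCH : P {ω | ∃ j, θ ⟨0, hB⟩ ω j - θ₀ j = 0} = 0)
    (hzero : ∀ s : Fin d → Bool,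
      (P {ω | (fun j => θ ⟨0, hB⟩ ω j - θ₀ j) ∈ orthant s}).toReal = 1 / 2 ^ d) :
    (P {ω | ∃ j, (∀ k, θ₀ j < θ k ω j) ∨ (∀ k, θ k ω j < θ₀ j)}).toReal
        = 1 - (1 - (2 : ℝ) ^ (1 - (B : ℤ))) ^ d := by
  classical
  set k0 : Fin B := ⟨0, hB⟩ with hk0
  set c : ℝ≥0∞ := ((2:ℝ≥0∞)^d)⁻¹ with hc
  -- transfer of measure between replicates
  have htrans : ∀ k (S : Set (Fin d → ℝ)), MeasurableSet S →
      P (θ k ⁻¹' S) = P (θ k0 ⁻¹' S) := by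
    intro k S hS
    rw [← Measure.map_apply (hmeas k) hS, hident k, Measure.map_apply (hmeas k0) hS]
  -- boundary is null
  have hBd0 : ∀ k, P (θ k ⁻¹' bdry θ₀) = 0 := by
    intro k
    rw [htrans k _ (bdry_meas θ₀)]
    have : θ k0 ⁻¹' bdry θ₀ = {ω | ∃ j, θ k0 ω j - θ₀ j = 0} := by
      ext ω; simp [bdry, sub_eq_zero]
    rw [this]; exact hMCH
  -- closed orthant probability
  have hCo : ∀ s, P (θ k0 ⁻¹' cOrth θ₀ s) = c := by
    intro s
    have heq : {ω | (fun j => θ k0 ω j - θ₀ j) ∈ orthant s} = θ k0 ⁻¹' cOrth θ₀ s := by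
      ext ω
      simp only [orthant, cOrth, Set.mem_setOf_eq, Set.mem_preimage]
      refine forall_congr' fun j => ?_
      cases hsj : s j <;> simp [sub_nonneg, sub_nonpos]
    have h := hzero s; rw [heq] at h
    have hne : P (θ k0 ⁻¹' cOrth θ₀ s) ≠ ⊤ := measure_ne_top _ _
    have h2 : P (θ k0 ⁻¹' cOrth θ₀ s) = ENNReal.ofReal (1/2^d) := by
      rw [← h, ENNReal.ofReal_toReal hne]
    rw [h2, hc]
    rw [one_div, ENNReal.ofReal_inv_of_pos (by positivity), ENNReal.ofReal_pow (by norm_num)]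
    norm_num
  -- strict orthant probability for every replicate
  have hSoP : ∀ k s, P (θ k ⁻¹' sOrth θ₀ s) = c := by
    intro k s
    rw [htrans k _ (sOrth_meas θ₀ s)]
    refine le_antisymm ?_ ?_
    · rw [← hCo s]
      exact measure_mono (Set.preimage_mono (sOrth_subset_cOrth θ₀ s))
    · rw [← hCo s]
      calc P (θ k0 ⁻¹' cOrth θ₀ s)
          ≤ P (θ k0 ⁻¹' sOrth θ₀ s ∪ θ k0 ⁻¹' bdry θ₀) := by
            refine measure_mono ?_
            rw [← Set.preimage_union]
            exact Set.preimage_mono (cOrth_subset θ₀ s)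
        _ ≤ P (θ k0 ⁻¹' sOrth θ₀ s) + P (θ k0 ⁻¹' bdry θ₀) := measure_union_le _ _
        _ = P (θ k0 ⁻¹' sOrth θ₀ s) := by rw [hBd0 k0, add_zero]
  -- sign-matrix events
  set E : (Fin B → Fin d → Bool) → Set Ω := fun σ => ⋂ k, θ k ⁻¹' sOrth θ₀ (σ k) with hE
  have hEmeas : ∀ σ, MeasurableSet (E σ) :=
    fun σ => MeasurableSet.iInter fun k => (hmeas k) (sOrth_meas θ₀ (σ k))
  have hEP : ∀ σ, P (E σ) = c ^ B := by
    intro σ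
    rw [hE]
    rw [hindep.meas_iInter (fun k => ⟨sOrth θ₀ (σ k), sOrth_meas θ₀ (σ k), rfl⟩)]
    simp [hSoP]
  have hdisj : ∀ σ σ' : Fin B → Fin d → Bool, σ ≠ σ' → Disjoint (E σ) (E σ') := by
    intro σ σ' hne
    rw [Set.disjoint_left]
    intro ω h1 h2
    obtain ⟨k, hk⟩ := Function.ne_iff.mp hne
    obtain ⟨j, hj⟩ := Function.ne_iff.mp hk
    have g1 := Set.mem_iInter.mp h1 k j
    have g2 := Set.mem_iInter.mp h2 k j
    cases hs1 : σ k j <;> cases hs2 : σ' k j <;> simp [hs1, hs2] at g1 g2 hj <;> linarith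
  -- target set
  set T : Set Ω := {ω | ∃ j, (∀ k, θ₀ j < θ k ω j) ∨ (∀ k, θ k ω j < θ₀ j)} with hT
  have hmeasc : ∀ k j, Measurable fun ω => θ k ω j :=
    fun k j => (measurable_pi_apply j).comp (hmeas k)
  have mT : MeasurableSet T := by
    have hTeq : T = ⋃ j, ((⋂ k, {ω | θ₀ j < θ k ω j}) ∪ (⋂ k, {ω | θ k ω j < θ₀ j})) := by
      ext ω; simp [hT, Set.mem_iUnion, Set.mem_iInter]
    rw [hTeq]
    refine MeasurableSet.iUnion fun j => MeasurableSet.union ?_ ?_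
    · exact MeasurableSet.iInter fun k => measurableSet_lt measurable_const (hmeasc k j)
    · exact MeasurableSet.iInter fun k => measurableSet_lt (hmeasc k j) measurable_const
  set GF : Finset (Fin B → Fin d → Bool) :=
    Finset.univ.filter (fun σ => ∀ j, (∃ k, σ k j = true) ∧ (∃ k, σ k j = false)) with hGF
  have hsub1 : (⋃ σ ∈ GF, E σ) ⊆ Tᶜ := by
    intro ω hω
    simp only [Set.mem_iUnion] at hω
    obtain ⟨σ, hσGF, hωE⟩ := hω
    have hσ : ∀ j, (∃ k, σ k j = true) ∧ (∃ k, σ k j = false) := (Finset.mem_filter.mp hσGF).2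
    intro hωT
    obtain ⟨j, hj⟩ := hωT
    rcases hj with hall | hall
    · obtain ⟨k, hk⟩ := (hσ j).2
      have hm := Set.mem_iInter.mp hωE k
      have := hm
      simp only [Set.mem_preimage, sOrth, Set.mem_setOf_eq] at this
      have h2 := this j
      rw [hk] at h2
      simp at h2
      exact absurd (hall k) (not_lt.mpr (le_of_lt h2))
    · obtain ⟨k, hk⟩ := (hσ j).1
      have hm := Set.mem_iInter.mp hωE k
      have := hm
      simp only [Set.mem_preimage, sOrth, Set.mem_setOf_eq] at this
      have h2 := this j
      rw [hk] at h2
      simp at h2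
      exact absurd (hall k) (not_lt.mpr (le_of_lt h2))
  have hsub2 : Tᶜ ⊆ (⋃ σ ∈ GF, E σ) ∪ (⋃ k, θ k ⁻¹' bdry θ₀) := by
    intro ω hω
    by_cases hb : ω ∈ ⋃ k, θ k ⁻¹' bdry θ₀
    · exact Or.inr hb
    · left
      simp only [Set.mem_iUnion, Set.mem_preimage] at hb
      push_neg at hb
      have hne : ∀ k j, θ k ω j ≠ θ₀ j := by
        intro k j h; exact hb k ⟨j, h⟩
      have hωT : ∀ j, ¬(∀ k, θ₀ j < θ k ω j) ∧ ¬(∀ k, θ k ω j < θ₀ j) := by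
        have h := hω
        simp only [hT, Set.mem_compl_iff, Set.mem_setOf_eq, not_exists, not_or] at h
        exact h
      refine Set.mem_iUnion.mpr ⟨fun k j => decide (θ₀ j < θ k ω j), Set.mem_iUnion.mpr ⟨?_, ?_⟩⟩
      · refine Finset.mem_filter.mpr ⟨Finset.mem_univ _, fun j => ⟨?_, ?_⟩⟩
        · obtain ⟨k, hk⟩ := not_forall.mp (hωT j).2
          have hgt : θ₀ j < θ k ω j := lt_of_le_of_ne (not_lt.mp hk) (Ne.symm (hne k j))
          exact ⟨k, by simp [hgt]⟩
        · obtain ⟨k, hk⟩ := not_forall.mp (hωT j).1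
          have hlt : θ k ω j < θ₀ j := lt_of_le_of_ne (not_lt.mp hk) (hne k j)
          exact ⟨k, by simp [not_lt.mpr (le_of_lt hlt)]⟩
      · refine Set.mem_iInter.mpr fun k => ?_
        simp only [Set.mem_preimage, sOrth, Set.mem_setOf_eq]
        intro j
        by_cases h : θ₀ j < θ k ω j
        · simp [h]
        · have hlt : θ k ω j < θ₀ j := lt_of_le_of_ne (not_lt.mp h) (hne k j)
          simp [h, hlt]
  have hTc : P Tᶜ = P (⋃ σ ∈ GF, E σ) := by
    refine le_antisymm ?_ (measure_mono hsub1)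
    calc P Tᶜ ≤ P ((⋃ σ ∈ GF, E σ) ∪ (⋃ k, θ k ⁻¹' bdry θ₀)) := measure_mono hsub2
      _ ≤ P (⋃ σ ∈ GF, E σ) + P (⋃ k, θ k ⁻¹' bdry θ₀) := measure_union_le _ _
      _ = P (⋃ σ ∈ GF, E σ) := by rw [measure_iUnion_null (fun k => hBd0 k), add_zero]
  have hsum : P (⋃ σ ∈ GF, E σ) = (GF.card : ℝ≥0∞) * c ^ B := by
    rw [measure_biUnion_finset (fun σ _ σ' _ hne => hdisj σ σ' hne) (fun σ _ => hEmeas σ)]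
    rw [Finset.sum_congr rfl (fun σ _ => hEP σ), Finset.sum_const, nsmul_eq_mul]
  have hcard : GF.card = (2^B - 2)^d := count_good hB
  have hPT : P T = 1 - P Tᶜ := by
    have h := prob_compl_eq_one_sub (μ := P) mT.compl
    rwa [compl_compl] at h
  have hfin : P Tᶜ = ((((2:ℕ)^B - 2)^d : ℕ) : ℝ≥0∞) * c ^ B := by
    rw [hTc, hsum, hcard]
  have hle1 : ((((2:ℕ)^B - 2)^d : ℕ) : ℝ≥0∞) * c ^ B ≤ 1 := by
    rw [← hfin]; exact prob_le_one
  rw [hPT, hfin, ENNReal.toReal_sub_of_le hle1 (by norm_num), ENNReal.toReal_one,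
    ENNReal.toReal_mul, ENNReal.toReal_pow, ENNReal.toReal_natCast]
  have hcR : c.toReal = ((2:ℝ)^d)⁻¹ := by
    rw [hc, ENNReal.toReal_inv, ENNReal.toReal_pow]; norm_num
  rw [hcR]
  have h2B : (2:ℕ) ≤ 2^B := by
    calc (2:ℕ) = 2^1 := (pow_one 2).symm
    _ ≤ 2^B := Nat.pow_le_pow_right (by norm_num) hB
  have hcast : (((2^B - 2)^d : ℕ) : ℝ) = ((2:ℝ)^B - 2)^d := by
    rw [Nat.cast_pow, Nat.cast_sub h2B]; norm_num
  rw [hcast]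
  have hp : (2:ℝ)^(1 - (B:ℤ)) = 2 / 2^B := by
    rw [zpow_sub₀ (by norm_num : (2:ℝ) ≠ 0), zpow_one, zpow_natCast]
  rw [hp]
  have h2Bpos : (0:ℝ) < 2^B := by positivity
  have key : ((2:ℝ)^B - 2)^d * (((2:ℝ)^d)⁻¹)^B = (1 - 2/(2:ℝ)^B)^d := by
    rw [show (1 - 2/(2:ℝ)^B) = ((2:ℝ)^B - 2)/2^B by field_simp, div_pow,
      inv_pow, ← pow_mul, ← pow_mul, mul_comm d B, div_eq_mul_inv]
  rw [key]


/-- for i.i.d. MCH estimators with zero orthant median bias (every closed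
orthant has probability exactly `2^{−d}`), the miscoverage of the rectangular hull equals
`1 − (1 − 2^{−B+1})^d`, and it is at most `α` iff `B ≥ 1 − log₂(1 − (1−α)^{1/d})`. -/
theorem rectHull_miscoverage_zero_bias
    {Ω : Type*} [MeasurableSpace Ω] (P : Measure Ω) [IsProbabilityMeasure P]
    {d B : ℕ} (hd : 1 ≤ d) (hB : 1 ≤ B)
    (θ : Fin B → Ω → Fin d → ℝ) (θ₀ : Fin d → ℝ)
    (hmeas : ∀ k, Measurable (θ k))
    (hindep : iIndepFun θ P)
    (hident : ∀ k, Measure.map (θ k) P = Measure.map (θ ⟨0, hB⟩) P)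
    (hMCH : P {ω | ∃ j, θ ⟨0, hB⟩ ω j - θ₀ j = 0} = 0)
    (hzero : ∀ s : Fin d → Bool,
      (P {ω | (fun j => θ ⟨0, hB⟩ ω j - θ₀ j) ∈ orthant s}).toReal = 1 / 2 ^ d)
    (α : ℝ) (hα : α ∈ Set.Ioo (0 : ℝ) 1) :
    (P {ω | ∃ j, (∀ k, θ₀ j < θ k ω j) ∨ (∀ k, θ k ω j < θ₀ j)}).toReal
        = 1 - (1 - (2 : ℝ) ^ (1 - (B : ℤ))) ^ d
      ∧ ((P {ω | ∃ j, (∀ k, θ₀ j < θ k ω j) ∨ (∀ k, θ k ω j < θ₀ j)}).toReal ≤ α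
          ↔ 1 - Real.logb 2 (1 - (1 - α) ^ ((d : ℝ)⁻¹)) ≤ (B : ℝ)) := by
  have h1 := main_calc P hd hB θ θ₀ hmeas hindep hident hMCH hzero
  refine ⟨h1, ?_⟩
  rw [h1]
  exact part2 hd hB hα
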